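/- Let x = (x₁,x₂) and y = (y₁,y₂) be commuting ω-Weyl pairs of level N in a unital ℂ-algebra A, let λ > 0, and set w := −x₂⁻¹x₁y₂ (so that w^N = −1). Let Ψ : R → ℂ be a nonzero solution of λ'·Ψ(v) = Ψ(ωv)·(1 − vλ) for all v ∈ R, where R := {v ∈ ℂ : v^N = −1}, and let p ∈ ℂ[X] be the unique polynomial of degree < N with p(v) = Ψ(v) for all v ∈ R (Lagrange interpolation at the N distinct points of R). Define T := (Σ_{i,j=0}^{N−1} ω^{−ij} y₁^i x₂^j) · p(w) ∈ A. Then T intertwines the root-of-unity flip: T·(x•_λy)_k = x_k·T and T·(x*_λy)_k = y_k·T for k = 1, 2. -/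

import Mathlib

set_option linter.unusedSectionVars false
set_option maxHeartbeats 1000000
namespace QDL

open Polynomial Finset

variable {A : Type*} [Ring A] [Algebra ℂ A]

lemma sum_shift {N : ℕ} (f : ℕ → A) (hf : f N = f 0) :
    ∑ i ∈ Finset.range N, f (i + 1) = ∑ i ∈ Finset.range N, f i := by
  have h2 := Finset.sum_range_succ' f N
  rw [Finset.sum_range_succ, hf] at h2
  exact (add_right_cancel h2).symm

/-- From `w z = ω (z w)` deduce `w^k z = ω^k (z w^k)`. -/
lemma pow_mul_comm {ω : ℂ} {w z : A} (h : w * z = ω • (z * w)) (k : ℕ) :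
    w ^ k * z = ω ^ k • (z * w ^ k) := by
  induction k with
  | zero => simp
  | succ k ih =>
    calc w ^ (k + 1) * z = w ^ k * (w * z) := by rw [pow_succ, mul_assoc]
    _ = ω • (w ^ k * z * w) := by rw [h, mul_smul_comm, mul_assoc]
    _ = ω • ((ω ^ k • (z * w ^ k)) * w) := by rw [ih]
    _ = (ω ^ k * ω) • (z * (w ^ k * w)) := by
        rw [smul_mul_assoc, smul_smul, mul_assoc, mul_comm ω]
    _ = ω ^ (k + 1) • (z * w ^ (k + 1)) := by rw [← pow_succ, ← pow_succ]

/-- From `a b = ω (b a)` deduce `a b^j = ω^j (b^j a)`. -/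
lemma mul_pow_comm {ω : ℂ} {a b : A} (h : a * b = ω • (b * a)) (j : ℕ) :
    a * b ^ j = ω ^ j • (b ^ j * a) := by
  induction j with
  | zero => simp
  | succ j ih =>
    calc a * b ^ (j + 1) = (a * b ^ j) * b := by rw [pow_succ, mul_assoc]
    _ = ω ^ j • (b ^ j * (a * b)) := by rw [ih, smul_mul_assoc, mul_assoc]
    _ = (ω ^ j * ω) • (b ^ j * (b * a)) := by rw [h, mul_smul_comm, smul_smul]
    _ = ω ^ (j + 1) • (b ^ (j + 1) * a) := by
        rw [pow_succ ω, pow_succ b, mul_assoc]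

/-- `q`-binomial-type power formula: if `a e = μ (e a)` then
`(e a)^k = μ^(k choose 2) (e^k a^k)`. -/
lemma mul_pow_smul {μ : ℂ} {e a : A} (h : a * e = μ • (e * a)) (k : ℕ) :
    (e * a) ^ k = μ ^ (k.choose 2) • (e ^ k * a ^ k) := by
  induction k with
  | zero => simp
  | succ k ih =>
    have h1 : a ^ k * e = μ ^ k • (e * a ^ k) := pow_mul_comm h k
    calc (e * a) ^ (k + 1) = (e * a) ^ k * (e * a) := pow_succ _ _
    _ = μ ^ (k.choose 2) • (e ^ k * ((a ^ k * e) * a)) := by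
        rw [ih, smul_mul_assoc, mul_assoc, ← mul_assoc (a ^ k)]
    _ = (μ ^ (k.choose 2) * μ ^ k) • (e ^ k * (e * (a ^ k * a))) := by
        rw [h1, smul_mul_assoc, mul_smul_comm, smul_smul, mul_assoc]
    _ = μ ^ ((k + 1).choose 2) • (e ^ (k + 1) * a ^ (k + 1)) := by
        rw [← pow_add, ← mul_assoc, ← pow_succ e, ← pow_succ a]
        congr 2
        rw [Nat.choose_succ_succ, Nat.choose_one_right, Nat.add_comm]

lemma aeval_mul_comm {ω : ℂ} {w z : A} (h : w * z = ω • (z * w)) (q : ℂ[X]) :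
    Polynomial.aeval w q * z = z * Polynomial.aeval w (q.comp (Polynomial.C ω * Polynomial.X)) := by
  induction q using Polynomial.induction_on' with
  | add p q hp hq => rw [add_comp, map_add, map_add, add_mul, mul_add, hp, hq]
  | monomial n c =>
    have hpow := pow_mul_comm h n
    have hr : (Polynomial.aeval w) ((monomial n c).comp (C ω * X)) = (c * ω ^ n) • w ^ n := by
      rw [← C_mul_X_pow_eq_monomial, mul_comp, C_comp, pow_comp, X_comp, map_mul, map_pow,
        aeval_C, map_mul, aeval_C, aeval_X, ← Algebra.smul_def, ← Algebra.smul_def, _root_.smul_pow,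
        smul_smul]
    rw [hr, aeval_monomial, ← Algebra.smul_def, smul_mul_assoc, hpow, smul_smul, mul_smul_comm]


lemma omega_sign {N : ℕ} (hN : 2 ≤ N) {ω : ℂ} (hω : IsPrimitiveRoot ω N) :
    (-1 : ℂ) ^ N * ω ^ ((N - 1) * N.choose 2) = -1 := by
  rcases Nat.even_or_odd N with he | ho
  · obtain ⟨m, hm⟩ := he
    have hm2 : N = 2 * m := by omega
    have hhalf : ω ^ m = -1 := by
      have hsq : ω ^ m * ω ^ m = 1 := by
        rw [← pow_add, show m + m = N by omega]; exact hω.pow_eq_one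
      have h2 : (ω ^ m - 1) * (ω ^ m + 1) = 0 := by linear_combination hsq
      rcases mul_eq_zero.mp h2 with h | h
      · exact absurd (sub_eq_zero.mp h) (hω.pow_ne_one_of_pos_of_lt (by omega) (by omega))
      · exact eq_neg_of_add_eq_zero_left h
    have hch : (N - 1) * N.choose 2 = m * ((N - 1) * (N - 1)) := by
      have h3 : (2 * m) * ((2 * m) - 1) / 2 = m * (2 * m - 1) := by
        rw [mul_assoc, Nat.mul_div_cancel_left _ (by norm_num : 0 < 2)]
      rw [Nat.choose_two_right, hm2, h3]; ring
    have hNo : Odd ((N - 1) * (N - 1)) := by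
      have h4 : Odd (N - 1) := by rw [Nat.odd_iff]; omega
      exact h4.mul h4
    have heN : Even N := ⟨m, hm⟩
    rw [hch, pow_mul, hhalf, hNo.neg_one_pow, heN.neg_one_pow, one_mul]
  · have h1 : ω ^ ((N - 1) * N.choose 2) = 1 := by
      have h2 : 2 ∣ (N - 1) := by have := Nat.odd_iff.mp ho; omega
      have hch : (N - 1) * N.choose 2 = N * ((N - 1) * ((N - 1) / 2)) := by
        rw [Nat.choose_two_right, Nat.mul_div_assoc N h2]; ring
      rw [hch, pow_mul, hω.pow_eq_one, one_pow]
    rw [h1, mul_one, ho.neg_one_pow]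

lemma interp_vanish {N : ℕ} (hN : 2 ≤ N) {ω v₀ : ℂ} (hω : IsPrimitiveRoot ω N)
    (hv₀ : v₀ ^ N = -1) {q : ℂ[X]} (hq : ∀ v : ℂ, v ^ N = -1 → q.eval v = 0) :
    ∃ r : ℂ[X], q = (X ^ N + 1) * r := by
  have hNpos : 0 < N := by omega
  have hM : (X ^ N + 1 : ℂ[X]).Monic := by
    have := Polynomial.monic_X_pow_add_C (R := ℂ) (a := 1) (by omega : N ≠ 0)
    simpa using this
  set g := q %ₘ (X ^ N + 1) with hgdef
  have hdiv := Polynomial.modByMonic_add_div q (X ^ N + 1 : ℂ[X])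
  have hkey : g = 0 := by
    rcases eq_or_ne g 0 with h | h
    · exact h
    refine Polynomial.eq_zero_of_natDegree_lt_card_of_eval_eq_zero g
      (f := fun k : Fin N => v₀ * ω ^ (k : ℕ)) ?_ ?_ ?_
    · intro i j hij
      have hv0 : v₀ ≠ 0 := by
        intro h0; rw [h0, zero_pow (by omega : N ≠ 0)] at hv₀; norm_num at hv₀
      exact Fin.ext (hω.pow_inj i.isLt j.isLt (mul_left_cancel₀ hv0 hij))
    · intro k
      have hvk : (v₀ * ω ^ (k : ℕ)) ^ N = -1 := by
        rw [mul_pow, ← pow_mul, mul_comm (k : ℕ) N, pow_mul, hω.pow_eq_one, one_pow,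
          mul_one, hv₀]
      have h5 := congrArg (Polynomial.eval (v₀ * ω ^ (k : ℕ))) hdiv
      rw [eval_add, eval_mul, hq _ hvk] at h5
      have h6 : Polynomial.eval (v₀ * ω ^ (k : ℕ)) (X ^ N + 1 : ℂ[X]) = 0 := by
        rw [eval_add, eval_pow, eval_X, eval_one, hvk]; ring
      rw [h6, zero_mul, add_zero] at h5
      exact h5
    · have hdeg := Polynomial.degree_modByMonic_lt q hM
      have hdegM : (X ^ N + 1 : ℂ[X]).degree = N := by
        simpa using Polynomial.degree_X_pow_add_C (R := ℂ) hNpos (a := 1)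
      rw [hdegM] at hdeg
      rw [Fintype.card_fin]
      exact (Polynomial.natDegree_lt_iff_degree_lt h).mpr hdeg
  have hg0 : q %ₘ (X ^ N + 1) = 0 := hkey
  rw [hg0, zero_add] at hdiv
  exact ⟨q /ₘ (X ^ N + 1), hdiv.symm⟩

end QDL




/-- An `ω`-Weyl pair of level `N` in a unital `ℂ`-algebra:
`a₁a₂ = ω a₂a₁` and `a₁^N = a₂^N = 1`. -/
def IsCyclicWeylPair {A : Type*} [Ring A] [Algebra ℂ A] (ω : ℂ) (N : ℕ) (a : A × A) : Prop :=
  a.1 * a.2 = ω • (a.2 * a.1) ∧ a.1 ^ N = 1 ∧ a.2 ^ N = 1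

/-- Two pairs commute componentwise. -/
def PairCommute {A : Type*} [Ring A] (x y : A × A) : Prop :=
  ∀ i j : Fin 2, Commute (if i = 0 then x.1 else x.2) (if j = 0 then y.1 else y.2)

/-- `λ' := (1 + λ^N)^{1/N}`, the positive real `N`-th root. -/
noncomputable def lamPrime (lam : ℝ) (N : ℕ) : ℝ := (1 + lam ^ N) ^ ((1 : ℝ) / N)

/-- The root-of-unity "dot" operation `x •_λ y := (x₁y₁, (x₂ + x₁y₂λ)/λ')`. -/
noncomputable def Cdot {A : Type*} [Ring A] [Algebra ℂ A] (lam : ℝ) (N : ℕ)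
    (x y : A × A) : A × A :=
  (x.1 * y.1, (((lamPrime lam N)⁻¹ : ℝ) : ℂ) • (x.2 + ((lam : ℝ) : ℂ) • (x.1 * y.2)))

/-- The root-of-unity "star" operation
`x *_λ y := (y₁x₂((x•_λy)₂)⁻¹, y₂((x•_λy)₂)⁻¹)`. -/
noncomputable def Cstar {A : Type*} [Ring A] [Algebra ℂ A] (lam : ℝ) (N : ℕ)
    (x y : A × A) : A × A :=
  (y.1 * x.2 * Ring.inverse (Cdot lam N x y).2, y.2 * Ring.inverse (Cdot lam N x y).2)

/-- The compact (root of unity) quantum dilogarithm intertwiner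
`T := (Σ_{i,j=0}^{N−1} ω^{−ij} y₁^i x₂^j) · p(w)`, where `w := −x₂⁻¹x₁y₂`. -/
noncomputable def Tintertwiner {A : Type*} [Ring A] [Algebra ℂ A]
    (ω : ℂ) (N : ℕ) (x y : A × A) (p : Polynomial ℂ) : A :=
  (∑ i ∈ Finset.range N, ∑ j ∈ Finset.range N,
      (ω⁻¹ ^ (i * j)) • (y.1 ^ i * x.2 ^ j)) *
    Polynomial.aeval (-(Ring.inverse x.2 * x.1 * y.2)) p

/-- If `Ψ` is a nonzero solution of the compact quantum dilogarithm equation on the `N`-th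
roots of `−1`, and `p` is the polynomial of degree `< N` interpolating `Ψ` there, then
`T = (Σ ω^{−ij} y₁^i x₂^j) p(w)` (with `w = −x₂⁻¹x₁y₂`) intertwines the root-of-unity
decorated flip: `T (x•_λy)_k = x_k T` and `T (x*_λy)_k = y_k T` for `k = 1,2`. -/
theorem compact_qdilog_intertwines {A : Type*} [Ring A] [Algebra ℂ A]
    (N : ℕ) (hN : 2 ≤ N) (ω : ℂ) (hω : IsPrimitiveRoot ω N)
    (lam : ℝ) (hlam : 0 < lam)
    (x y : A × A)
    (hx : IsCyclicWeylPair ω N x) (hy : IsCyclicWeylPair ω N y)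
    (hxy : PairCommute x y)
    (Ψ : ℂ → ℂ)
    (hΨne : ∃ v : ℂ, v ^ N = -1 ∧ Ψ v ≠ 0)
    (hΨ : ∀ v : ℂ, v ^ N = -1 →
      ((lamPrime lam N : ℝ) : ℂ) * Ψ v = Ψ (ω * v) * (1 - v * lam))
    (p : Polynomial ℂ) (hpdeg : p.degree < N)
    (hp : ∀ v : ℂ, v ^ N = -1 → p.eval v = Ψ v) :
    (Tintertwiner ω N x y p * (Cdot lam N x y).1 = x.1 * Tintertwiner ω N x y p) ∧
    (Tintertwiner ω N x y p * (Cdot lam N x y).2 = x.2 * Tintertwiner ω N x y p) ∧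
    (Tintertwiner ω N x y p * (Cstar lam N x y).1 = y.1 * Tintertwiner ω N x y p) ∧
    (Tintertwiner ω N x y p * (Cstar lam N x y).2 = y.2 * Tintertwiner ω N x y p) := by
  classical
  obtain ⟨hab, haN, hbN⟩ := hx
  obtain ⟨hcd, hcN, hdN⟩ := hy
  have hac : Commute x.1 y.1 := by simpa using hxy 0 0
  have had : Commute x.1 y.2 := by simpa using hxy 0 1
  have hbc : Commute x.2 y.1 := by simpa using hxy 1 0
  have hbd : Commute x.2 y.2 := by simpa using hxy 1 1
  have hN0 : N ≠ 0 := by omega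
  have hωN : ω ^ N = 1 := hω.pow_eq_one
  have hω0 : ω ≠ 0 := by
    intro h; rw [h, zero_pow hN0] at hωN; exact zero_ne_one hωN
  have hωinv : ω⁻¹ * ω = 1 := inv_mul_cancel₀ hω0
  have hωinvN : (ω⁻¹) ^ N = 1 := by rw [inv_pow, hωN, inv_one]
  -- inverse of x.2
  have hb1 : x.2 ^ (N - 1) * x.2 = 1 := by
    rw [← pow_succ, show N - 1 + 1 = N by omega, hbN]
  have hb2 : x.2 * x.2 ^ (N - 1) = 1 := by
    rw [((Commute.refl x.2).pow_right (N - 1)).eq, hb1]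
  have hbinv : Ring.inverse x.2 = x.2 ^ (N - 1) := Ring.inverse_unit ⟨x.2, x.2 ^ (N - 1), hb2, hb1⟩
  simp only [Tintertwiner, Cdot, Cstar, hbinv]
  set w : A := -(x.2 ^ (N - 1) * x.1 * y.2) with hwdef
  set S : A := ∑ i ∈ Finset.range N, ∑ j ∈ Finset.range N,
      (ω⁻¹ ^ (i * j)) • (y.1 ^ i * x.2 ^ j) with hSdef
  set P : A := Polynomial.aeval w p with hPdef
  set lc : ℂ := ((lam : ℝ) : ℂ) with hlcdef
  set lp : ℂ := ((lamPrime lam N : ℝ) : ℂ) with hlpdef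
  have hlampos : 0 < lamPrime lam N := Real.rpow_pos_of_pos (by positivity) _
  have hlp0 : lp ≠ 0 := by
    rw [hlpdef]; exact_mod_cast hlampos.ne'
  -- commutation relations of w
  have hωe : ω * ω ^ (N - 1) = 1 := by
    rw [mul_comm, ← pow_succ, show N - 1 + 1 = N by omega, hωN]
  have hbw : x.2 * w = -(x.1 * y.2) := by
    rw [hwdef, mul_neg, ← mul_assoc, ← mul_assoc, hb2, one_mul]
  have hwb : w * x.2 = ω • (x.2 * w) := by
    rw [hbw, hwdef]
    simp only [neg_mul, smul_neg, neg_inj, mul_assoc]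
    rw [hbd.symm.eq, ← mul_assoc x.1 x.2 y.2, hab, smul_mul_assoc, mul_smul_comm]
    simp only [← mul_assoc]
    rw [hb1, one_mul]
  have hwa : w * x.1 = ω • (x.1 * w) := by
    have h1 : x.1 * x.2 ^ (N - 1) = ω ^ (N - 1) • (x.2 ^ (N - 1) * x.1) :=
      QDL.mul_pow_comm hab (N - 1)
    rw [hwdef]
    simp only [neg_mul, mul_neg, smul_neg, neg_inj, mul_assoc]
    rw [had.symm.eq, ← mul_assoc x.1 (x.2 ^ (N - 1)), h1]
    simp only [smul_mul_assoc, smul_smul, mul_assoc]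
    rw [hωe, one_smul]
  have hcw : y.1 * w = ω • (w * y.1) := by
    rw [hwdef]
    simp only [neg_mul, mul_neg, smul_neg, neg_inj, mul_assoc]
    rw [← mul_assoc y.1, (hbc.symm.pow_right (N - 1)).eq, mul_assoc,
      ← mul_assoc y.1 x.1, hac.symm.eq, mul_assoc, hcd]
    simp only [mul_smul_comm]
  have hwc : w * y.1 = ω⁻¹ • (y.1 * w) := by
    rw [hcw, smul_smul, hωinv, one_smul]
  have hwd : w * y.2 = (1 : ℂ) • (y.2 * w) := by
    rw [one_smul, hwdef]
    simp only [neg_mul, mul_neg, neg_inj, mul_assoc]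
    rw [← mul_assoc y.2, (hbd.pow_left (N - 1)).symm.eq, mul_assoc,
      ← mul_assoc y.2 x.1, had.symm.eq, mul_assoc]
  -- w ^ N = -1
  have hwN : w ^ N = -1 := by
    have h1 : x.1 * x.2 ^ (N - 1) = ω ^ (N - 1) • (x.2 ^ (N - 1) * x.1) :=
      QDL.mul_pow_comm hab (N - 1)
    have hu := QDL.mul_pow_smul h1 N
    have hud : Commute (x.2 ^ (N - 1) * x.1) y.2 :=
      Commute.mul_left (hbd.pow_left (N - 1)) had
    have hxN : (x.2 ^ (N - 1)) ^ N = 1 := by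
      rw [← pow_mul, mul_comm, pow_mul, hbN, one_pow]
    calc w ^ N = ((-1 : ℂ) • (x.2 ^ (N - 1) * x.1 * y.2)) ^ N := by
          rw [hwdef, neg_smul, one_smul]
    _ = (-1 : ℂ) ^ N • ((x.2 ^ (N - 1) * x.1) ^ N * y.2 ^ N) := by
          rw [_root_.smul_pow, hud.mul_pow]
    _ = ((-1 : ℂ) ^ N * ω ^ ((N - 1) * N.choose 2)) • (1 : A) := by
          rw [hu, hdN, mul_one, hxN, haN, one_mul, smul_smul, ← pow_mul]
    _ = -1 := by rw [QDL.omega_sign hN hω, neg_smul, one_smul]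
  -- S commutes with x.2 and with y.1
  have hbS : Commute x.2 S := by
    rw [hSdef]
    refine Commute.sum_right _ _ _ fun i _ => Commute.sum_right _ _ _ fun j _ => ?_
    exact ((hbc.pow_right i).mul_right ((Commute.refl x.2).pow_right j)).smul_right _
  have hcS : Commute y.1 S := by
    rw [hSdef]
    refine Commute.sum_right _ _ _ fun i _ => Commute.sum_right _ _ _ fun j _ => ?_
    exact (((Commute.refl y.1).pow_right i).mul_right (hbc.symm.pow_right j)).smul_right _
  -- the two shift relations for S
  have hsc1 : ∀ i j : ℕ, ω⁻¹ ^ ((i + 1) * j) * ω ^ j = ω⁻¹ ^ (i * j) := by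
    intro i j
    rw [Nat.succ_mul, pow_add, mul_assoc, ← mul_pow, hωinv, one_pow, mul_one]
  have rel1 : x.1 * S = y.1 * (S * x.1) := by
    have hL : x.1 * S = ∑ i ∈ Finset.range N,
        ∑ j ∈ Finset.range N, (ω⁻¹ ^ (i * j) * ω ^ j) • (y.1 ^ i * (x.2 ^ j * x.1)) := by
      rw [hSdef, Finset.mul_sum]
      refine Finset.sum_congr rfl fun i _ => ?_
      rw [Finset.mul_sum]
      refine Finset.sum_congr rfl fun j _ => ?_
      rw [mul_smul_comm, ← mul_assoc, (hac.pow_right i).eq, mul_assoc,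
        QDL.mul_pow_comm hab j, mul_smul_comm, smul_smul]
    have hR : y.1 * (S * x.1) = ∑ i ∈ Finset.range N,
        ∑ j ∈ Finset.range N,
          (ω⁻¹ ^ ((i + 1) * j) * ω ^ j) • (y.1 ^ (i + 1) * (x.2 ^ j * x.1)) := by
      rw [hSdef, Finset.sum_mul, Finset.mul_sum]
      refine Finset.sum_congr rfl fun i _ => ?_
      rw [Finset.sum_mul, Finset.mul_sum]
      refine Finset.sum_congr rfl fun j _ => ?_
      rw [hsc1, smul_mul_assoc, mul_smul_comm, pow_succ']
      simp only [mul_assoc]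
    rw [hL, hR]
    exact (QDL.sum_shift
      (fun i => ∑ j ∈ Finset.range N, (ω⁻¹ ^ (i * j) * ω ^ j) • (y.1 ^ i * (x.2 ^ j * x.1)))
      (by
        refine Finset.sum_congr rfl fun j _ => ?_
        simp [hcN, pow_mul, hωinvN])).symm
  have rel2 : y.2 * (S * x.2) = S * y.2 := by
    have hdc : y.2 * y.1 = ω⁻¹ • (y.1 * y.2) := by
      rw [hcd, smul_smul, hωinv, one_smul]
    rw [hSdef, Finset.sum_mul, Finset.mul_sum, Finset.sum_mul]
    refine Finset.sum_congr rfl fun i _ => ?_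
    rw [Finset.sum_mul, Finset.mul_sum, Finset.sum_mul]
    have hstep : ∀ j, y.2 * ((ω⁻¹ ^ (i * j)) • (y.1 ^ i * x.2 ^ j) * x.2)
        = ω⁻¹ ^ (i * (j + 1)) • (y.1 ^ i * (x.2 ^ (j + 1) * y.2)) := by
      intro j
      rw [smul_mul_assoc, mul_smul_comm, show i * (j + 1) = i * j + i by ring, pow_add]
      rw [mul_assoc (y.1 ^ i), ← mul_assoc y.2, QDL.mul_pow_comm hdc i, smul_mul_assoc,
        smul_smul]
      congr 1
      rw [mul_assoc, ← mul_assoc y.2, (hbd.symm.pow_right j).eq, mul_assoc (x.2 ^ j),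
        hbd.symm.eq, ← mul_assoc (x.2 ^ j) x.2 y.2, ← pow_succ]
    calc ∑ j ∈ Finset.range N, y.2 * ((ω⁻¹ ^ (i * j)) • (y.1 ^ i * x.2 ^ j) * x.2)
        = ∑ j ∈ Finset.range N,
            (fun j => ω⁻¹ ^ (i * j) • (y.1 ^ i * (x.2 ^ j * y.2))) (j + 1) :=
          Finset.sum_congr rfl fun j _ => hstep j
    _ = ∑ j ∈ Finset.range N, ω⁻¹ ^ (i * j) • (y.1 ^ i * (x.2 ^ j * y.2)) := by
          refine QDL.sum_shift (fun j => ω⁻¹ ^ (i * j) • (y.1 ^ i * (x.2 ^ j * y.2))) ?_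
          beta_reduce
          rw [mul_comm i N, pow_mul, hωinvN, one_pow, hbN, Nat.mul_zero, pow_zero, pow_zero]
    _ = ∑ j ∈ Finset.range N, (ω⁻¹ ^ (i * j)) • (y.1 ^ i * x.2 ^ j) * y.2 := by
          refine Finset.sum_congr rfl fun j _ => ?_
          rw [smul_mul_assoc, mul_assoc]
  -- the interpolation identity evaluated at w
  obtain ⟨v₀, hv₀N, -⟩ := hΨne
  have hqvanish : ∀ v : ℂ, v ^ N = -1 →
      ((p.comp (Polynomial.C ω * Polynomial.X)) * (1 - Polynomial.C lc * Polynomial.X)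
        - Polynomial.C lp * p).eval v = 0 := by
    intro v hv
    have hv' : (ω * v) ^ N = -1 := by rw [mul_pow, hωN, one_mul, hv]
    have h := hΨ v hv
    simp only [Polynomial.eval_sub, Polynomial.eval_mul, Polynomial.eval_comp,
      Polynomial.eval_one, Polynomial.eval_C, Polynomial.eval_X, hp v hv, hp _ hv']
    linear_combination -h
  obtain ⟨r, hqr⟩ := QDL.interp_vanish hN hω hv₀N hqvanish
  have haevalq : Polynomial.aeval w ((p.comp (Polynomial.C ω * Polynomial.X))
      * (1 - Polynomial.C lc * Polynomial.X) - Polynomial.C lp * p) = 0 := by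
    rw [hqr, map_mul, map_add, map_pow, Polynomial.aeval_X, map_one, hwN, neg_add_cancel,
      zero_mul]
  have hkey : Polynomial.aeval w (p.comp (Polynomial.C ω * Polynomial.X)) * (1 - lc • w)
      = lp • P := by
    have h1 : Polynomial.aeval w (1 - Polynomial.C lc * Polynomial.X) = 1 - lc • w := by
      rw [map_sub, map_one, map_mul, Polynomial.aeval_C, Polynomial.aeval_X,
        ← Algebra.smul_def]
    rw [map_sub, map_mul, map_mul, h1, Polynomial.aeval_C, ← Algebra.smul_def,
      sub_eq_zero] at haevalq
    exact haevalq
  have hEdef : x.2 + lc • (x.1 * y.2) = x.2 * (1 - lc • w) := by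
    rw [mul_sub, mul_one, mul_smul_comm, hbw, smul_neg, sub_neg_eq_add]
  have hs : (((lamPrime lam N)⁻¹ : ℝ) : ℂ) * lp = 1 := by
    rw [hlpdef, Complex.ofReal_inv]
    exact inv_mul_cancel₀ (by exact_mod_cast hlampos.ne')
  have hpD : P * ((((lamPrime lam N)⁻¹ : ℝ) : ℂ) • (x.2 + lc • (x.1 * y.2))) = x.2 * P := by
    rw [hEdef, mul_smul_comm, ← mul_assoc, QDL.aeval_mul_comm hwb p, mul_assoc, hkey,
      mul_smul_comm, smul_smul, hs, one_smul]
  -- the decorated element is invertible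
  set z : A := lc • w with hzdef
  have hzN : z ^ N = -((lc ^ N) • 1) := by
    rw [hzdef, _root_.smul_pow, hwN, smul_neg]
  have hone : (1 : ℂ) + lc ^ N ≠ 0 := by
    rw [hlcdef, ← Complex.ofReal_pow, ← Complex.ofReal_one, ← Complex.ofReal_add]
    exact_mod_cast (by positivity : (0 : ℝ) < 1 + lam ^ N).ne'
  set g0 : A := ∑ k ∈ Finset.range N, z ^ k with hg0def
  have hzg : Commute z g0 := Commute.sum_right _ _ _ fun k _ => (Commute.refl z).pow_right k
  have hgeo : g0 * (1 - z) = (1 + lc ^ N) • 1 := by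
    calc g0 * (1 - z) = -(g0 * (z - 1)) := by rw [← mul_neg, neg_sub]
    _ = -(z ^ N - 1) := by rw [hg0def, geom_sum_mul]
    _ = (1 + lc ^ N) • 1 := by rw [hzN, add_smul, one_smul]; abel
  have hgeo2 : (1 - z) * g0 = (1 + lc ^ N) • 1 := by
    rw [← hgeo]
    exact (Commute.sub_left (Commute.one_left g0) hzg).eq
  have hzunit : IsUnit (1 - z) := by
    refine isUnit_iff_exists.mpr ⟨(1 + lc ^ N)⁻¹ • g0, ?_, ?_⟩
    · rw [mul_smul_comm, hgeo2, smul_smul, inv_mul_cancel₀ hone, one_smul]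
    · rw [smul_mul_assoc, hgeo, smul_smul, inv_mul_cancel₀ hone, one_smul]
  have hDunit : IsUnit ((((lamPrime lam N)⁻¹ : ℝ) : ℂ) • (x.2 + lc • (x.1 * y.2))) := by
    rw [hEdef]
    have h1 : IsUnit (x.2) := ⟨⟨x.2, x.2 ^ (N - 1), hb2, hb1⟩, rfl⟩
    have h2 : (((lamPrime lam N)⁻¹ : ℝ) : ℂ) • (x.2 * (1 - z))
        = ((((lamPrime lam N)⁻¹ : ℝ) : ℂ) • 1) * (x.2 * (1 - z)) := by
      rw [smul_mul_assoc, one_mul]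
    have hsu : IsUnit ((((lamPrime lam N)⁻¹ : ℝ) : ℂ) • (1 : A)) := by
      refine isUnit_iff_exists.mpr ⟨lp • 1, ?_, ?_⟩
      · rw [smul_mul_assoc, one_mul, smul_smul, hs, one_smul]
      · rw [smul_mul_assoc, one_mul, smul_smul, mul_comm lp, hs, one_smul]
    rw [h2]
    exact hsu.mul (h1.mul hzunit)
  have hDD : ((((lamPrime lam N)⁻¹ : ℝ) : ℂ) • (x.2 + lc • (x.1 * y.2)))
      * Ring.inverse ((((lamPrime lam N)⁻¹ : ℝ) : ℂ) • (x.2 + lc • (x.1 * y.2))) = 1 :=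
    Ring.mul_inverse_cancel _ hDunit
  -- composition identities
  have hcomp1 : (p.comp (Polynomial.C ω * Polynomial.X)).comp
      (Polynomial.C ω⁻¹ * Polynomial.X) = p := by
    rw [Polynomial.comp_assoc, Polynomial.mul_comp, Polynomial.C_comp, Polynomial.X_comp,
      ← mul_assoc, ← Polynomial.C_mul, mul_inv_cancel₀ hω0, Polynomial.C_1, one_mul,
      Polynomial.comp_X]
  have hcomp2 : (p.comp (Polynomial.C ω⁻¹ * Polynomial.X)).comp
      (Polynomial.C ω * Polynomial.X) = p := by
    rw [Polynomial.comp_assoc, Polynomial.mul_comp, Polynomial.C_comp, Polynomial.X_comp,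
      ← mul_assoc, ← Polynomial.C_mul, hωinv, Polynomial.C_1, one_mul, Polynomial.comp_X]
  have hPa : P * x.1 = x.1 * Polynomial.aeval w (p.comp (Polynomial.C ω * Polynomial.X)) :=
    QDL.aeval_mul_comm hwa p
  have hPωc : Polynomial.aeval w (p.comp (Polynomial.C ω * Polynomial.X)) * y.1
      = y.1 * P := by
    have h := QDL.aeval_mul_comm hwc (p.comp (Polynomial.C ω * Polynomial.X))
    rwa [hcomp1] at h
  have hPc : P * y.1 = y.1 * Polynomial.aeval w (p.comp (Polynomial.C ω⁻¹ * Polynomial.X)) :=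
    QDL.aeval_mul_comm hwc p
  have hPmb : Polynomial.aeval w (p.comp (Polynomial.C ω⁻¹ * Polynomial.X)) * x.2
      = x.2 * P := by
    have h := QDL.aeval_mul_comm hwb (p.comp (Polynomial.C ω⁻¹ * Polynomial.X))
    rwa [hcomp2] at h
  have hPd : P * y.2 = y.2 * P := by
    have h := QDL.aeval_mul_comm hwd p
    rwa [Polynomial.C_1, one_mul, Polynomial.comp_X] at h
  refine ⟨?_, ?_, ?_, ?_⟩
  · have hyS : Commute y.1 (S * x.1) := hcS.mul_right hac.symm
    calc S * P * (x.1 * y.1)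
        = S * (x.1 * (Polynomial.aeval w (p.comp (Polynomial.C ω * Polynomial.X)) * y.1)) := by
          rw [mul_assoc, ← mul_assoc P, hPa, mul_assoc x.1]
    _ = S * (x.1 * (y.1 * P)) := by rw [hPωc]
    _ = S * x.1 * y.1 * P := by simp only [mul_assoc]
    _ = y.1 * (S * x.1) * P := by rw [hyS.eq]
    _ = x.1 * (S * P) := by rw [← rel1, mul_assoc]
  · rw [mul_assoc, hpD, ← mul_assoc, ← hbS.eq, mul_assoc]
  · simp only [mul_assoc]
    rw [← mul_assoc P y.1, hPc, mul_assoc y.1, ← mul_assoc _ x.2, hPmb, mul_assoc x.2,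
      ← mul_assoc x.2 P, ← hpD, mul_assoc P, hDD, mul_one]
    rw [← mul_assoc, ← hcS.eq, mul_assoc]
  · simp only [mul_assoc]
    rw [← mul_assoc P y.2, hPd, mul_assoc y.2, ← mul_assoc, ← rel2]
    simp only [mul_assoc]
    rw [← mul_assoc x.2 P, ← hpD, mul_assoc P, hDD, mul_one]
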